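/- Let D = (V,E) be a digraph on n vertices that contains a spanning in-arborescence and a spanning out-arborescence with the same root r which are edge-disjoint. Then D admits an edge temporalisation making the resulting temporal graph temporally connected, i.e., with temporal reachability equal to n² (every node temporally reachable from every node). -/

import Mathlib

/-- A temporal path in a digraph with edge relation `E` and temporalisation `τ`:
a nonempty list of edges of `E`, consecutive (head = next tail), from `u` to `v`,
with strictly increasing times. -/
def IsTemporalPath {V : Type*} (E : V → V → Prop) (τ : V × V → ℕ)
    (u v : V) (p : List (V × V)) : Prop :=
  (∀ e ∈ p, E e.1 e.2) ∧
  (∃ e ∈ p.head?, e.1 = u) ∧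
  (∃ e ∈ p.getLast?, e.2 = v) ∧
  p.Chain' (fun e f => e.2 = f.1) ∧
  p.Chain' (fun e f => τ e < τ f)

/-- `v` is temporally reachable from `u`. -/
def TReach {V : Type*} (E : V → V → Prop) (τ : V × V → ℕ) (u v : V) : Prop :=
  u = v ∨ ∃ p, IsTemporalPath E τ u v p

/-- `T` is (the edge relation of) an out-arborescence of the digraph `E`,
rooted at `r`, spanning the vertex set `B`. -/
structure IsOutArb {V : Type*} (E : V → V → Prop) (T : V → V → Prop)
    (r : V) (B : Set V) : Prop where
  sub : ∀ ⦃a b⦄, T a b → E a b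
  mem : ∀ ⦃a b⦄, T a b → a ∈ B ∧ b ∈ B
  root : r ∈ B
  reach : ∀ v ∈ B, Relation.ReflTransGen T r v
  parent : ∀ v ∈ B, v ≠ r → ∃! u, T u v
  rootNoParent : ∀ u, ¬ T u r

/-- `T` is (the edge relation of) an in-arborescence of the digraph `E`,
rooted at `r`, spanning the vertex set `B`. -/
structure IsInArb {V : Type*} (E : V → V → Prop) (T : V → V → Prop)
    (r : V) (B : Set V) : Prop where
  sub : ∀ ⦃a b⦄, T a b → E a b
  mem : ∀ ⦃a b⦄, T a b → a ∈ B ∧ b ∈ B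
  root : r ∈ B
  reach : ∀ v ∈ B, Relation.ReflTransGen T v r
  child : ∀ v ∈ B, v ≠ r → ∃! u, T v u
  rootNoChild : ∀ u, ¬ T r u


section Aux


variable {V : Type*}

lemma exists_rank (R : V → V → Prop) (r : V)
    (hreach : ∀ v, Relation.ReflTransGen R v r)
    (huniq : ∀ v u u', R v u → R v u' → u = u')
    (hroot : ∀ u, ¬ R r u) :
    ∃ d : V → ℕ, ∀ v u, R v u → d u < d v := by
  classical
  set s : V → V := fun v => if h : ∃ u, R v u then h.choose else v with hs
  have hstep : ∀ v u, R v u → s v = u := by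
    intro v u h
    have hex : ∃ u, R v u := ⟨u, h⟩
    simp only [hs, dif_pos hex]
    exact huniq v _ u hex.choose_spec h
  have key : ∀ v, ∃ n, s^[n] v = r := by
    intro v
    induction hreach v using Relation.ReflTransGen.head_induction_on with
    | refl => exact ⟨0, rfl⟩
    | head hab _ ih =>
      obtain ⟨n, hn⟩ := ih
      exact ⟨n + 1, by rw [Function.iterate_succ_apply, hstep _ _ hab, hn]⟩
  refine ⟨fun v => Nat.find (key v), ?_⟩
  intro v u h
  have hvr : v ≠ r := fun hv => hroot u (hv ▸ h)
  have hpos : Nat.find (key v) ≠ 0 := by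
    intro h0
    have := Nat.find_spec (key v)
    rw [h0] at this
    exact hvr this
  obtain ⟨m, hm⟩ := Nat.exists_eq_succ_of_ne_zero hpos
  have hspec := Nat.find_spec (key v)
  rw [hm, Function.iterate_succ_apply, hstep _ _ h] at hspec
  have hle : Nat.find (key u) ≤ m := Nat.find_le hspec
  show Nat.find (key u) < Nat.find (key v)
  omega

lemma build_path (R : V → V → Prop) (r : V) :
    ∀ u, Relation.ReflTransGen R u r → u = r ∨
    ∃ p : List (V × V), p ≠ [] ∧ (∀ e ∈ p, R e.1 e.2) ∧
      (∃ e ∈ p.head?, e.1 = u) ∧ (∃ e ∈ p.getLast?, e.2 = r) ∧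
      p.Chain' (fun e f => e.2 = f.1) := by
  intro u h
  induction h using Relation.ReflTransGen.head_induction_on with
  | refl => exact Or.inl rfl
  | @head a b hab _ ih =>
    right
    rcases ih with hb | ⟨p, hne, hmem, ⟨e, he, he1⟩, hlast, hchain⟩
    · refine ⟨[(a, r)], by simp, by simpa using hb ▸ hab, ⟨(a, r), by simp⟩,
        ⟨(a, r), by simp⟩, List.isChain_singleton _⟩
    · refine ⟨(a, b) :: p, by simp, ?_, ⟨(a, b), by simp⟩, ?_, ?_⟩
      · rintro f hf
        rcases List.mem_cons.1 hf with rfl | hf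
        · exact hab
        · exact hmem f hf
      · obtain ⟨x, t, rfl⟩ := List.exists_cons_of_ne_nil hne
        simpa using hlast
      · unfold List.Chain'; rw [List.isChain_cons]
        refine ⟨fun y hy => ?_, hchain⟩
        have : y = e := by rw [Option.mem_def] at hy he; rw [hy] at he; exact Option.some_inj.1 he
        subst this
        exact he1.symm

lemma build_path_rev (R : V → V → Prop) (r v : V)
    (h : Relation.ReflTransGen R r v) (hne : v ≠ r) :
    ∃ p : List (V × V), p ≠ [] ∧ (∀ e ∈ p, R e.1 e.2) ∧
      (∃ e ∈ p.head?, e.1 = r) ∧ (∃ e ∈ p.getLast?, e.2 = v) ∧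
      p.Chain' (fun e f => e.2 = f.1) := by
  have h' : Relation.ReflTransGen (Function.swap R) v r :=
    Relation.reflTransGen_swap.2 h
  rcases build_path (Function.swap R) r v h' with hv | ⟨p, hpne, hmem, ⟨e, he, he1⟩, ⟨f, hf, hf2⟩, hchain⟩
  · exact absurd hv hne
  refine ⟨p.reverse.map Prod.swap, by simpa using hpne, ?_, ?_, ?_, ?_⟩
  · intro g hg
    simp only [List.mem_map, List.mem_reverse] at hg
    obtain ⟨x, hx, rfl⟩ := hg
    exact hmem x hx
  · refine ⟨f.swap, ?_, hf2⟩
    rw [List.head?_map, List.head?_reverse]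
    exact Option.mem_map_of_mem _ hf
  · refine ⟨e.swap, ?_, he1⟩
    rw [List.getLast?_map, List.getLast?_reverse]
    exact Option.mem_map_of_mem _ he
  · unfold List.Chain'; rw [List.isChain_map, List.isChain_reverse]
    exact List.IsChain.imp (fun a b hab => hab.symm) hchain

lemma chain'_of_mem {α : Type*} {R S : α → α → Prop} {P : α → Prop} :
    ∀ {l : List α}, (∀ x ∈ l, P x) → l.Chain' R →
    (∀ x y, P x → P y → R x y → S x y) → l.Chain' S := by
  intro l
  induction l with
  | nil => intro _ _ _; exact List.isChain_nil
  | cons a l ih =>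
    intro hmem hchain himp
    unfold List.Chain' at hchain ⊢; rw [List.isChain_cons] at hchain ⊢
    exact ⟨fun b hb => himp _ _ (hmem a (by simp))
        (hmem b (List.mem_cons_of_mem _ (List.mem_of_mem_head? hb))) (hchain.1 b hb),
      ih (fun x hx => hmem x (List.mem_cons_of_mem _ hx)) hchain.2 himp⟩

end Aux

theorem stmt8 {V : Type*} [Fintype V] (E Tin Tout : V → V → Prop) (r : V)
    (hin : IsInArb E Tin r Set.univ) (hout : IsOutArb E Tout r Set.univ)
    (hdisj : ∀ a b, Tin a b → Tout a b → False) :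
    ∃ τ : V × V → ℕ, (∀ u v : V, TReach E τ u v) ∧
      {p : V × V | TReach E τ p.1 p.2}.ncard = Fintype.card V ^ 2 := by
  classical
  obtain ⟨din, hdin⟩ := exists_rank Tin r (fun v => hin.reach v trivial)
    (fun v u u' h h' =>
      (hin.child v trivial (fun hv => hin.rootNoChild u (hv ▸ h))).unique h h')
    hin.rootNoChild
  obtain ⟨dout, hdout'⟩ := exists_rank (Function.swap Tout) r
    (fun v => Relation.reflTransGen_swap.2 (hout.reach v trivial))
    (fun v u u' h h' =>
      (hout.parent v trivial (fun hv => hout.rootNoParent u (hv ▸ h))).unique h h')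
    hout.rootNoParent
  have hdout : ∀ u v, Tout u v → dout u < dout v := fun u v h => hdout' v u h
  set C : ℕ := Finset.univ.sup din with hC
  have hCle : ∀ v, din v ≤ C := fun v => Finset.le_sup (Finset.mem_univ v)
  set τ : V × V → ℕ := fun e => if Tin e.1 e.2 then C - din e.1 else C + 1 + dout e.2 with hτ
  have hτin : ∀ e : V × V, Tin e.1 e.2 → τ e = C - din e.1 := fun e h => if_pos h
  have hτout : ∀ e : V × V, Tout e.1 e.2 → τ e = C + 1 + dout e.2 := fun e h =>
    if_neg (fun h' => hdisj _ _ h' h)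
  -- in-paths are time-respecting
  have hinchain : ∀ p : List (V × V), (∀ e ∈ p, Tin e.1 e.2) →
      p.Chain' (fun e f => e.2 = f.1) → p.Chain' (fun e f => τ e < τ f) := by
    intro p hmem hchain
    refine chain'_of_mem hmem hchain ?_
    intro e f he hf hef
    rw [hτin e he, hτin f hf]
    have h1 : din f.1 < din e.1 := hef ▸ hdin e.1 e.2 he
    have := hCle e.1
    omega
  have houtchain : ∀ p : List (V × V), (∀ e ∈ p, Tout e.1 e.2) →
      p.Chain' (fun e f => e.2 = f.1) → p.Chain' (fun e f => τ e < τ f) := by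
    intro p hmem hchain
    refine chain'_of_mem hmem hchain ?_
    intro e f he hf hef
    rw [hτout e he, hτout f hf]
    have h1 : dout e.2 < dout f.2 := hef ▸ hdout f.1 f.2 hf
    omega
  -- constructed in-path from u (≠ r) to r
  have hpin : ∀ u : V, u ≠ r → ∃ p : List (V × V), p ≠ [] ∧ (∀ e ∈ p, Tin e.1 e.2) ∧
      IsTemporalPath E τ u r p := by
    intro u hu
    rcases build_path Tin r u (hin.reach u trivial) with h | ⟨p, hne, hmem, hhead, hlast, hchain⟩
    · exact absurd h hu
    exact ⟨p, hne, hmem, fun e he => hin.sub (hmem e he), hhead, hlast, hchain,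
      hinchain p hmem hchain⟩
  have hpout : ∀ v : V, v ≠ r → ∃ p : List (V × V), p ≠ [] ∧ (∀ e ∈ p, Tout e.1 e.2) ∧
      IsTemporalPath E τ r v p := by
    intro v hv
    obtain ⟨p, hne, hmem, hhead, hlast, hchain⟩ :=
      build_path_rev Tout r v (hout.reach v trivial) hv
    exact ⟨p, hne, hmem, fun e he => hout.sub (hmem e he), hhead, hlast, hchain,
      houtchain p hmem hchain⟩
  have hreach : ∀ u v : V, TReach E τ u v := by
    intro u v
    by_cases huv : u = v
    · exact Or.inl huv
    right
    by_cases hu : u = r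
    · subst hu
      obtain ⟨p, _, _, hp⟩ := hpout v (fun h => huv h.symm)
      exact ⟨p, hp⟩
    by_cases hv : v = r
    · subst hv
      obtain ⟨p, _, _, hp⟩ := hpin u hu
      exact ⟨p, hp⟩
    obtain ⟨p, hpne, hpmem, hpE, hphead, hplast, hpchain, hptime⟩ := hpin u hu
    obtain ⟨q, hqne, hqmem, hqE, hqhead, hqlast, hqchain, hqtime⟩ := hpout v hv
    refine ⟨p ++ q, ?_, ?_, ?_, ?_, ?_⟩
    · intro e he
      rcases List.mem_append.1 he with h | h
      · exact hpE e h
      · exact hqE e h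
    · obtain ⟨e, he, he1⟩ := hphead
      refine ⟨e, ?_, he1⟩
      rw [List.head?_append]
      rw [Option.mem_def] at he ⊢
      rw [he]; rfl
    · obtain ⟨e, he, he2⟩ := hqlast
      refine ⟨e, ?_, he2⟩
      rw [List.getLast?_append]
      rw [Option.mem_def] at he ⊢
      rw [he]; rfl
    · refine hpchain.append hqchain ?_
      intro x hx y hy
      obtain ⟨e, he, he2⟩ := hplast
      obtain ⟨f, hf, hf1⟩ := hqhead
      rw [Option.mem_def] at hx hy he hf
      rw [hx] at he; rw [hy] at hf
      cases Option.some_inj.1 he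
      cases Option.some_inj.1 hf
      rw [he2, hf1]
    · refine hptime.append hqtime ?_
      intro x hx y hy
      have hxin : Tin x.1 x.2 := hpmem x (List.mem_of_mem_getLast? hx)
      have hyout : Tout y.1 y.2 := hqmem y (List.mem_of_mem_head? hy)
      rw [hτin x hxin, hτout y hyout]
      have := hCle x.1
      omega
  refine ⟨τ, hreach, ?_⟩
  have : {p : V × V | TReach E τ p.1 p.2} = Set.univ := by
    ext p; simp [hreach p.1 p.2]
  rw [this, Set.ncard_univ, Nat.card_eq_fintype_card, Fintype.card_prod, sq]
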